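/- For a composition κ = (γ_1, …, γ_k) of n chosen uniformly at random among all 2^{n−1} compositions of n, let A_n be the event that the last part has a size not appearing among the earlier parts, i.e. γ_k ≠ γ_j for all j = 1, …, k−1. Then P(A_n) → 0 as n → ∞; indeed there is a constant C > 0 such that P(A_n) ≤ C √(n log n)/n for all n ≥ 2. -/

import Mathlib

open Filter Finset

/-- The event `A_n`: the last part of the composition has a size not appearing
among the earlier parts (vacuously true for a single-part composition). -/
def lastPartNew {n : ℕ} (c : Composition n) : Prop :=
  ∀ x ∈ c.blocks.dropLast, ∀ h : c.blocks ≠ [], x ≠ c.blocks.getLast h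

/-- `P(A_n)`: the probability of `A_n` under the uniform measure on the
`2^(n-1)` compositions of `n`. -/
noncomputable def probLastPartNew (n : ℕ) : ℝ :=
  (Nat.card {c : Composition n // lastPartNew c} : ℝ) / 2 ^ (n - 1)

/-- Lists of positive naturals, none equal to `m`, summing to `N`. -/
def AFin (m : ℕ) : ℕ → Finset (List ℕ)
  | 0 => {[]}
  | N+1 => ((Finset.Icc 1 (N+1)).erase m).attach.biUnion fun j =>
      (AFin m (N + 1 - j.1)).image (j.1 :: ·)
  decreasing_by
    have hj := j.2
    rw [Finset.mem_erase, Finset.mem_Icc] at hj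
    omega

lemma mem_AFin {m : ℕ} : ∀ {N : ℕ} {l : List ℕ},
    l ∈ AFin m N ↔ l.sum = N ∧ ∀ x ∈ l, 0 < x ∧ x ≠ m := by
  intro N
  induction N using Nat.strong_induction_on with
  | _ N ih =>
    intro l
    match N with
    | 0 =>
      simp only [AFin, Finset.mem_singleton]
      constructor
      · rintro rfl; simp
      · rintro ⟨hs, hp⟩
        cases l with
        | nil => rfl
        | cons x t =>
          exfalso
          have := (hp x (by simp)).1
          simp at hs; omega
    | N+1 =>
      simp only [AFin, Finset.mem_biUnion, Finset.mem_attach, Finset.mem_image, true_and,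
        Subtype.exists, Finset.mem_erase, Finset.mem_Icc]
      constructor
      · rintro ⟨j, ⟨hjm, hj1, hj2⟩, t, ht, rfl⟩
        rw [ih _ (by omega)] at ht
        refine ⟨by simp [ht.1]; omega, ?_⟩
        intro x hx
        rcases List.mem_cons.1 hx with rfl | hx
        · exact ⟨by omega, hjm⟩
        · exact ht.2 x hx
      · rintro ⟨hs, hp⟩
        cases l with
        | nil => simp at hs
        | cons x t =>
          have hx := hp x (by simp)
          have hts : t.sum = N + 1 - x := by simp at hs; omega
          refine ⟨x, ⟨hx.2, hx.1, ?_⟩, t, ?_, rfl⟩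
          · simp at hs; omega
          · rw [ih _ (by have := hx.1; omega)]
            exact ⟨hts, fun y hy => hp y (by simp [hy])⟩

lemma card_AFin_succ (m N : ℕ) :
    (AFin m (N+1)).card = ∑ j ∈ (Finset.Icc 1 (N+1)).erase m, (AFin m (N+1-j)).card := by
  rw [AFin]
  rw [Finset.card_biUnion]
  · rw [← Finset.sum_attach ((Finset.Icc 1 (N+1)).erase m) (fun j => (AFin m (N+1-j)).card)]
    refine Finset.sum_congr rfl fun j _ => ?_
    exact Finset.card_image_of_injective _ (fun a b h => by simpa using h)
  · intro x _ y _ hxy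
    rw [Function.onFun, Finset.disjoint_left]
    rintro l hx hy
    simp only [Finset.mem_image] at hx hy
    obtain ⟨a, _, rfl⟩ := hx
    obtain ⟨b, _, h⟩ := hy
    have e := (List.cons.injEq _ _ _ _ ▸ h).1.symm; exact hxy (Subtype.ext e)


lemma AFin_zero (m : ℕ) : AFin m 0 = {[]} := by rw [AFin]

/-- compositions of `n` whose last part is new, as lists -/
def TFin (n : ℕ) : Finset (List ℕ) :=
  (Finset.Icc 1 n).biUnion fun m => (AFin m (n - m)).image (· ++ [m])

lemma card_TFin (n : ℕ) :
    (TFin n).card = ∑ m ∈ Finset.Icc 1 n, (AFin m (n - m)).card := by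
  rw [TFin, Finset.card_biUnion]
  · exact Finset.sum_congr rfl fun m _ =>
      Finset.card_image_of_injective _ (fun a b h => by simpa using h)
  · intro x _ y _ hxy
    rw [Function.onFun, Finset.disjoint_left]
    rintro l hx hy
    simp only [Finset.mem_image] at hx hy
    obtain ⟨a, _, rfl⟩ := hx
    obtain ⟨b, _, h⟩ := hy
    apply hxy
    have := congrArg (fun l => l.getLast?) h
    simpa using this.symm

lemma mem_TFin {n : ℕ} {l : List ℕ} :
    l ∈ TFin n ↔ ∃ m ∈ Finset.Icc 1 n, ∃ l', (l'.sum = n - m ∧ ∀ x ∈ l', 0 < x ∧ x ≠ m)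
      ∧ l = l' ++ [m] := by
  simp only [TFin, Finset.mem_biUnion, Finset.mem_image]
  constructor
  · rintro ⟨m, hm, l', hl', rfl⟩
    exact ⟨m, hm, l', mem_AFin.1 hl', rfl⟩
  · rintro ⟨m, hm, l', hl', rfl⟩
    exact ⟨m, hm, l', mem_AFin.2 hl', rfl⟩

noncomputable def mainEquiv (n : ℕ) (hn : 1 ≤ n) :
    {c : Composition n // lastPartNew c} ≃ {l : List ℕ // l ∈ TFin n} where
  toFun := fun ⟨c, hc⟩ => ⟨c.blocks, by
    have hne : c.blocks ≠ [] := by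
      intro h
      have := c.blocks_sum
      rw [h] at this
      simp at this; omega
    set m := c.blocks.getLast hne with hm
    have hmem : m ∈ c.blocks := List.getLast_mem hne
    have hmpos : 0 < m := c.blocks_pos hmem
    have hsum : c.blocks.dropLast.sum + m = n := by
      conv_rhs => rw [← c.blocks_sum, ← List.dropLast_append_getLast hne]
      simp [hm]
    rw [mem_TFin]
    refine ⟨m, Finset.mem_Icc.2 ⟨hmpos, by omega⟩, c.blocks.dropLast,
      ⟨⟨by omega, fun x hx => ⟨c.blocks_pos (List.dropLast_sublist _ |>.subset hx), hc x hx hne⟩⟩,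
        (List.dropLast_append_getLast hne).symm⟩⟩⟩
  invFun := fun ⟨l, hl⟩ => by
    refine ⟨⟨l, ?_, ?_⟩, ?_⟩
    · intro i hi
      rw [mem_TFin] at hl
      obtain ⟨m, hm, l', ⟨hsum, hpos⟩, rfl⟩ := hl
      rcases List.mem_append.1 hi with h | h
      · exact (hpos i h).1
      · simp at h; subst h; exact (Finset.mem_Icc.1 hm).1
    · rw [mem_TFin] at hl
      obtain ⟨m, hm, l', ⟨hsum, hpos⟩, rfl⟩ := hl
      have := (Finset.mem_Icc.1 hm).2
      simp [hsum]; omega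
    · intro x hx h
      rw [mem_TFin] at hl
      obtain ⟨m, hm, l', ⟨hsum, hpos⟩, rfl⟩ := hl
      simp only [List.dropLast_concat] at hx
      rw [List.getLast_append]
      exact (hpos x hx).2
  left_inv := fun ⟨c, hc⟩ => by
    apply Subtype.ext
    exact Composition.ext rfl
  right_inv := fun ⟨l, hl⟩ => rfl

lemma card_lastPartNew (n : ℕ) (hn : 1 ≤ n) :
    Nat.card {c : Composition n // lastPartNew c}
      = ∑ m ∈ Finset.Icc 1 n, (AFin m (n - m)).card := by
  rw [Nat.card_congr (mainEquiv n hn), Nat.card_eq_finsetCard, card_TFin]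

noncomputable def yy (m : ℕ) : ℝ := 1 - (1/2 : ℝ) ^ (m + 2)

lemma yy_lt_one (m : ℕ) : yy m < 1 := by
  have : (0:ℝ) < (1/2:ℝ) ^ (m+2) := by positivity
  simp only [yy]; linarith

lemma yy_ge (m : ℕ) (hm : 1 ≤ m) : 7/8 ≤ yy m := by
  have h : (1/2 : ℝ) ^ (m + 2) ≤ (1/2:ℝ)^3 := by
    apply pow_le_pow_of_le_one (by norm_num) (by norm_num); omega
  simp only [yy]; norm_num at h ⊢; linarith

lemma geoSum0 (r : ℝ) (hr0 : 0 ≤ r) (hr1 : r < 1) (N : ℕ) :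
    ∑ i ∈ Finset.range N, r ^ i ≤ 1 / (1 - r) := by
  rw [geom_sum_eq (by linarith)]
  have heq : (r ^ N - 1) / (r - 1) = (1 - r ^ N) / (1 - r) := by
    rw [← neg_div_neg_eq]; ring_nf
  rw [heq, div_le_div_iff₀ (by linarith) (by linarith)]
  have : 0 ≤ r ^ N := by positivity
  nlinarith

lemma geoSum (r : ℝ) (hr0 : 0 ≤ r) (hr1 : r < 1) (N : ℕ) :
    ∑ j ∈ Finset.Icc 1 N, r ^ j ≤ r / (1 - r) := by
  have h1 : Finset.Icc 1 N = Finset.Ico 1 (N+1) := by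
    rw [Finset.Ico_add_one_right_eq_Icc]
  rw [h1, Finset.sum_Ico_eq_sum_range]
  simp only [Nat.add_sub_cancel]
  have h2 : ∀ i, r ^ (1 + i) = r * r ^ i := fun i => by rw [pow_add, pow_one]
  simp only [h2, ← Finset.mul_sum]
  have h3 : ∑ i ∈ Finset.range N, r ^ i ≤ 1 / (1 - r) := by
    rw [geom_sum_eq (by linarith)]
    have heq : (r ^ N - 1) / (r - 1) = (1 - r ^ N) / (1 - r) := by
      rw [← neg_div_neg_eq]; ring_nf
    rw [heq, div_le_div_iff₀ (by linarith) (by linarith)]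
    have : 0 ≤ r ^ N := by positivity
    nlinarith
  calc r * ∑ i ∈ Finset.range N, r ^ i ≤ r * (1 / (1-r)) := by
        apply mul_le_mul_of_nonneg_left h3 hr0
    _ = r / (1 - r) := by ring

lemma aFin_le_two_pow (m : ℕ) : ∀ N, ((AFin m N).card : ℝ) ≤ 2 ^ N := by
  intro N
  induction N using Nat.strong_induction_on with
  | _ N ih =>
    match N with
    | 0 => simp [AFin_zero]
    | N+1 =>
      rw [card_AFin_succ]
      push_cast
      calc (∑ j ∈ (Finset.Icc 1 (N+1)).erase m, ((AFin m (N+1-j)).card : ℝ))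
          ≤ ∑ j ∈ (Finset.Icc 1 (N+1)).erase m, (2:ℝ) ^ (N+1-j) := by
            apply Finset.sum_le_sum
            intro j hj
            have hj' := Finset.mem_Icc.1 (Finset.mem_of_mem_erase hj)
            exact ih _ (by omega)
        _ ≤ ∑ j ∈ Finset.Icc 1 (N+1), (2:ℝ) ^ (N+1-j) := by
            apply Finset.sum_le_sum_of_subset_of_nonneg (Finset.erase_subset _ _)
            intros; positivity
        _ = ∑ j ∈ Finset.Icc 1 (N+1), (2:ℝ)^(N+1) * (1/2) ^ j := by
            apply Finset.sum_congr rfl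
            intro j hj
            have hj' := (Finset.mem_Icc.1 hj).2
            rw [pow_sub₀ _ (by norm_num) hj']
            field_simp
            rw [← mul_pow]; norm_num
        _ = (2:ℝ)^(N+1) * ∑ j ∈ Finset.Icc 1 (N+1), (1/2:ℝ) ^ j := by
            rw [Finset.mul_sum]
        _ ≤ (2:ℝ)^(N+1) * ((1/2) / (1 - 1/2)) := by
            apply mul_le_mul_of_nonneg_left (geoSum _ (by norm_num) (by norm_num) _)
            positivity
        _ = 2 ^ (N+1) := by norm_num

lemma key_sum (m N : ℕ) (hm : 1 ≤ m) (hmN : m ≤ N) :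
    ∑ j ∈ (Finset.Icc 1 N).erase m, ((2 * yy m)⁻¹) ^ j ≤ 1 := by
  set u : ℝ := (1/2:ℝ) ^ (m+1) with hu
  have hu0 : 0 < u := by positivity
  have hu4 : u ≤ 1/4 := by
    have : (1/2:ℝ)^(m+1) ≤ (1/2:ℝ)^2 := by
      apply pow_le_pow_of_le_one (by norm_num) (by norm_num); omega
    norm_num at this ⊢; linarith
  have h2y : 2 * yy m = 2 - u := by
    simp only [yy, hu, pow_succ]
    ring
  set r : ℝ := (2 * yy m)⁻¹ with hr
  have h2ypos : (0:ℝ) < 2 * yy m := by rw [h2y]; linarith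
  have hr0 : 0 < r := by positivity
  have hrhalf : 1/2 ≤ r := by
    rw [hr, le_inv_comm₀ (by norm_num) h2ypos]
    rw [h2y]; linarith
  have hr1 : r < 1 := by
    rw [hr, inv_lt_one_iff₀]; right; rw [h2y]; linarith
  have hmem : m ∈ Finset.Icc 1 N := Finset.mem_Icc.2 ⟨hm, hmN⟩
  rw [Finset.sum_erase_eq_sub hmem]
  have h1 : ∑ j ∈ Finset.Icc 1 N, r ^ j ≤ r / (1 - r) := geoSum r hr0.le hr1 N
  have h2 : r / (1 - r) ≤ 1 / (1 - u) := by
    rw [div_le_div_iff₀ (by linarith) (by linarith)]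
    have hrr : r * (2 - u) = 1 := by
      rw [hr, h2y]
      exact inv_mul_cancel₀ (by linarith)
    nlinarith
  have h3 : 2 * u ≤ r ^ m := by
    have : (1/2:ℝ) ^ m ≤ r ^ m := pow_le_pow_left₀ (by norm_num) hrhalf m
    have heq : (1/2:ℝ) ^ m = 2 * u := by
      rw [hu, pow_succ]; ring
    linarith
  have h4 : 1 / (1 - u) ≤ 1 + 2 * u := by
    rw [div_le_iff₀ (by linarith)]
    nlinarith
  linarith

lemma claimA (m : ℕ) (hm : 1 ≤ m) : ∀ N, ((AFin m N).card : ℝ) ≤ (yy m)⁻¹ ^ m * (2 * yy m) ^ N := by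
  have hy0 : (0:ℝ) < yy m := by linarith [yy_ge m hm]
  have hy1 : yy m ≤ 1 := (yy_lt_one m).le
  have hyi : 1 ≤ (yy m)⁻¹ := one_le_inv_iff₀.2 ⟨hy0, hy1⟩
  intro N
  induction N using Nat.strong_induction_on with
  | _ N ih =>
    by_cases hNm : N < m
    · -- base: card ≤ 2^N ≤ y⁻¹^m (2y)^N
      calc ((AFin m N).card : ℝ) ≤ 2 ^ N := aFin_le_two_pow m N
        _ ≤ (yy m)⁻¹ ^ m * (2 * yy m) ^ N := by
            rw [mul_pow, inv_pow]
            have hpow : yy m ^ m ≤ yy m ^ N :=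
              pow_le_pow_of_le_one hy0.le hy1 (by omega)
            have h1 : (1:ℝ) ≤ (yy m ^ m)⁻¹ * yy m ^ N := by
              rw [← div_eq_inv_mul, le_div_iff₀ (by positivity)]
              linarith
            calc (2:ℝ)^N = 1 * 2^N := by ring
              _ ≤ ((yy m ^ m)⁻¹ * yy m ^ N) * 2 ^ N := by
                  apply mul_le_mul_of_nonneg_right h1 (by positivity)
              _ = (yy m ^ m)⁻¹ * (2 ^ N * yy m ^ N) := by ring
    · push_neg at hNm
      obtain ⟨K, rfl⟩ : ∃ K, N = K + 1 := ⟨N - 1, by omega⟩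
      rw [card_AFin_succ]
      push_cast
      set Y := yy m
      have h2Y : (0:ℝ) < 2 * Y := by positivity
      calc (∑ j ∈ (Finset.Icc 1 (K+1)).erase m, ((AFin m (K+1-j)).card : ℝ))
          ≤ ∑ j ∈ (Finset.Icc 1 (K+1)).erase m, Y⁻¹ ^ m * (2*Y) ^ (K+1-j) := by
            apply Finset.sum_le_sum
            intro j hj
            have hj' := Finset.mem_Icc.1 (Finset.mem_of_mem_erase hj)
            exact ih _ (by omega)
        _ = Y⁻¹ ^ m * (2*Y)^(K+1) * ∑ j ∈ (Finset.Icc 1 (K+1)).erase m, ((2*Y)⁻¹) ^ j := by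
            rw [Finset.mul_sum]
            apply Finset.sum_congr rfl
            intro j hj
            have hj' := (Finset.mem_Icc.1 (Finset.mem_of_mem_erase hj)).2
            rw [pow_sub₀ _ (by positivity) hj', inv_pow]
            field_simp
            rw [← mul_pow, mul_one_div_cancel h2Y.ne', one_pow]
        _ ≤ Y⁻¹ ^ m * (2*Y)^(K+1) * 1 := by
            apply mul_le_mul_of_nonneg_left (key_sum m (K+1) hm hNm)
            positivity
        _ = Y⁻¹ ^ m * (2*Y)^(K+1) := by ring

lemma two_mul_le_two_pow : ∀ m : ℕ, 2 * m ≤ 2 ^ m := by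
  intro m
  induction m with
  | zero => simp
  | succ k ih =>
    have : 1 ≤ 2 ^ k := Nat.one_le_two_pow
    rw [pow_succ]; omega

lemma yy_inv_pow_le (m : ℕ) (hm : 1 ≤ m) : (yy m)⁻¹ ^ m ≤ 8 / 7 := by
  have hy0 : (0:ℝ) < yy m := by linarith [yy_ge m hm]
  have hber : 1 + (m:ℝ) * (-(1/2:ℝ)^(m+2)) ≤ (yy m) ^ m := by
    have := one_add_mul_le_pow (a := -(1/2:ℝ)^(m+2)) (by
      have : (0:ℝ) ≤ (1/2:ℝ)^(m+2) := by positivity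
      have h1 : (1/2:ℝ)^(m+2) ≤ 1 := by
        apply pow_le_one₀ <;> norm_num
      linarith) m
    rw [yy, sub_eq_add_neg]; exact this
  have hsmall : (m:ℝ) * (1/2:ℝ)^(m+2) ≤ 1/8 := by
    have hn : (2 * m : ℕ) ≤ 2 ^ m := two_mul_le_two_pow m
    have hc : (2:ℝ) * m ≤ 2 ^ m := by exact_mod_cast hn
    have hp : (0:ℝ) < 2 ^ m := by positivity
    have heq : (1/2:ℝ)^(m+2) = 1 / (4 * 2^m) := by
      rw [pow_add, div_pow, one_pow]
      field_simp
      ring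
    rw [heq]
    rw [mul_one_div, div_le_div_iff₀ (by positivity) (by norm_num)]
    linarith
  have hpow : 7/8 ≤ (yy m) ^ m := by linarith
  have : (yy m)⁻¹ ^ m = ((yy m) ^ m)⁻¹ := by rw [inv_pow]
  rw [this]
  rw [inv_le_comm₀ (by positivity) (by norm_num)]
  linarith

lemma prob_eq (n : ℕ) (hn : 1 ≤ n) :
    probLastPartNew n = (∑ m ∈ Finset.Icc 1 n, ((AFin m (n - m)).card : ℝ)) / 2 ^ (n-1) := by
  rw [probLastPartNew, card_lastPartNew n hn]
  push_cast
  ring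

lemma prob_le_one (n : ℕ) : probLastPartNew n ≤ 1 := by
  rw [probLastPartNew, div_le_one (by positivity)]
  have h1 : Nat.card {c : Composition n // lastPartNew c} ≤ Nat.card (Composition n) :=
    Nat.card_le_card_of_injective Subtype.val Subtype.val_injective
  have h2 : Nat.card (Composition n) = 2 ^ (n-1) := by
    rw [Nat.card_eq_fintype_card, composition_card]
  rw [h2] at h1
  exact_mod_cast h1

lemma prob_nonneg (n : ℕ) : 0 ≤ probLastPartNew n := by
  rw [probLastPartNew]; positivity

/-- The main quantitative bound. -/
lemma prob_le (n : ℕ) (hn : 2 ≤ n) : probLastPartNew n ≤ 39 / Real.sqrt n := by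
  have hs0 : (0:ℝ) < Real.sqrt n := Real.sqrt_pos.2 (by positivity)
  by_cases hbig : n < 16
  · calc probLastPartNew n ≤ 1 := prob_le_one n
      _ ≤ 39 / Real.sqrt n := by
        rw [le_div_iff₀ hs0]
        have : Real.sqrt n ≤ Real.sqrt 16 := Real.sqrt_le_sqrt (by exact_mod_cast hbig.le)
        have h16 : Real.sqrt 16 = 4 := by
          rw [show (16:ℝ) = 4^2 by norm_num, Real.sqrt_sq (by norm_num)]
        linarith
  push_neg at hbig
  set s := Real.sqrt n with hsdef
  have hss : s * s = n := Real.mul_self_sqrt (by positivity)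
  set L := Nat.log 2 n with hL
  set M := L / 2 + 1 with hM
  have hL4 : 4 ≤ L := by
    exact (Nat.le_log_iff_pow_le (by norm_num) (by omega)).2 (by omega : 2^4 ≤ n)
  have hpowL : 2 ^ L ≤ n := Nat.pow_log_le_self 2 (by omega)
  have hpowL' : n < 2 ^ (L + 1) := Nat.lt_pow_succ_log_self (by norm_num) n
  have hM1 : 1 ≤ M := by omega
  have f1 : n < 2 ^ (2 * M) := by
    calc n < 2 ^ (L+1) := hpowL'
      _ ≤ 2 ^ (2 * M) := Nat.pow_le_pow_right (by norm_num) (by omega)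
  have f2 : 2 ^ (2 * (M - 1)) ≤ n := by
    calc 2 ^ (2 * (M-1)) ≤ 2 ^ L := Nat.pow_le_pow_right (by norm_num) (by omega)
      _ ≤ n := hpowL
  have f3 : 2 * M ≤ n := by
    have h1 : L + 2 ≤ 2 ^ L := by
      calc L + 2 ≤ 2 * L := by omega
        _ ≤ 2 ^ L := two_mul_le_two_pow L
    omega
  have hMn : M ≤ n := by omega
  -- real versions
  have g1 : s ≤ (2:ℝ) ^ M := by
    have : (n:ℝ) ≤ ((2:ℝ) ^ M) ^ 2 := by
      rw [← pow_mul, mul_comm]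
      exact_mod_cast f1.le
    calc s = Real.sqrt n := rfl
      _ ≤ Real.sqrt (((2:ℝ)^M)^2) := Real.sqrt_le_sqrt this
      _ = (2:ℝ)^M := Real.sqrt_sq (by positivity)
  have g2 : (2:ℝ) ^ (M + 2) ≤ 8 * s := by
    have h1 : ((2:ℝ) ^ (M-1)) ^ 2 ≤ (n:ℝ) := by
      rw [← pow_mul, mul_comm]
      exact_mod_cast f2
    have h2 : (2:ℝ) ^ (M-1) ≤ s := by
      rw [hsdef, show ((n:ℝ)) = (n:ℝ) by rfl]
      rw [show (2:ℝ)^(M-1) = Real.sqrt (((2:ℝ)^(M-1))^2) by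
        rw [Real.sqrt_sq (by positivity)]]
      exact Real.sqrt_le_sqrt h1
    have h3 : (2:ℝ) ^ (M+2) = 8 * (2:ℝ)^(M-1) := by
      rw [show M + 2 = (M-1) + 3 by omega, pow_add]
      ring
    rw [h3]
    linarith
  -- the sum bound
  have hterm : ∀ m ∈ Finset.Icc 1 n, ((AFin m (n-m)).card : ℝ) / 2 ^ (n-1)
      ≤ (16/7) * ((1/2:ℝ)^m * (yy m) ^ (n - m)) := by
    intro m hm
    obtain ⟨hm1, hmn⟩ := Finset.mem_Icc.1 hm
    have hy0 : (0:ℝ) < yy m := by linarith [yy_ge m hm1]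
    have h1 : ((AFin m (n-m)).card : ℝ) ≤ (yy m)⁻¹ ^ m * (2 * yy m) ^ (n-m) :=
      claimA m hm1 (n-m)
    have h2 : (yy m)⁻¹ ^ m * (2 * yy m) ^ (n-m) ≤ (8/7) * (2 ^ (n-m) * (yy m) ^ (n-m)) := by
      rw [mul_pow]
      apply mul_le_mul_of_nonneg_right (yy_inv_pow_le m hm1) (by positivity)
    have hhalf : (1/2:ℝ)^m = ((2:ℝ)^m)⁻¹ := by rw [div_pow, one_pow, one_div]
    have h3' : (2:ℝ)^(n-m) = 2 * (1/2:ℝ)^m * 2^(n-1) := by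
      have e1 : (n - m) + m = (n-1) + 1 := by omega
      have hp : ((2:ℝ)^m) ≠ 0 := by positivity
      calc (2:ℝ)^(n-m) = 2^(n-m) * 2^m * (2^m)⁻¹ := by field_simp
        _ = 2^((n-m)+m) * (2^m)⁻¹ := by rw [pow_add]
        _ = 2^((n-1)+1) * (2^m)⁻¹ := by rw [e1]
        _ = 2 * (1/2)^m * 2^(n-1) := by rw [pow_succ, hhalf]; ring
    rw [div_le_iff₀ (by positivity)]
    calc ((AFin m (n-m)).card : ℝ) ≤ (8/7) * (2 ^ (n-m) * (yy m) ^ (n-m)) := le_trans h1 h2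
      _ = (16/7) * ((1/2:ℝ)^m * (yy m) ^ (n-m)) * 2 ^ (n-1) := by
          rw [h3']; ring
  have hsplit : probLastPartNew n ≤
      (16/7) * ∑ m ∈ Finset.Icc 1 n, (1/2:ℝ)^m * (yy m) ^ (n - m) := by
    rw [prob_eq n (by omega), Finset.sum_div]
    calc ∑ m ∈ Finset.Icc 1 n, ((AFin m (n-m)).card : ℝ) / 2^(n-1)
        ≤ ∑ m ∈ Finset.Icc 1 n, (16/7) * ((1/2:ℝ)^m * (yy m) ^ (n - m)) :=
          Finset.sum_le_sum hterm
      _ = (16/7) * ∑ m ∈ Finset.Icc 1 n, (1/2:ℝ)^m * (yy m) ^ (n - m) := by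
          rw [Finset.mul_sum]
  -- split the sum at M
  have hunion : Finset.Icc 1 n = Finset.Icc 1 M ∪ Finset.Ioc M n := by
    ext x
    simp only [Finset.mem_Icc, Finset.mem_union, Finset.mem_Ioc]
    omega
  have hdisj : Disjoint (Finset.Icc 1 M) (Finset.Ioc M n) := by
    rw [Finset.disjoint_left]
    intro a ha hb
    rw [Finset.mem_Icc] at ha
    rw [Finset.mem_Ioc] at hb
    omega
  have hS1 : ∑ m ∈ Finset.Icc 1 M, (1/2:ℝ)^m * (yy m) ^ (n - m) ≤ 16 / s := by
    have hB : ∀ m ∈ Finset.Icc 1 M, (yy m) ^ (n-m) ≤ 16 / s := by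
      intro m hm
      obtain ⟨hm1, hmM⟩ := Finset.mem_Icc.1 hm
      have hy0 : (0:ℝ) < yy m := by linarith [yy_ge m hm1]
      have hmono : yy m ≤ yy M := by
        simp only [yy]
        have : (1/2:ℝ)^(M+2) ≤ (1/2:ℝ)^(m+2) :=
          pow_le_pow_of_le_one (by norm_num) (by norm_num) (by omega)
        linarith
    -- (yy m)^(n-m) ≤ (yy M)^(n-m) ≤ (yy M)^(n-M) ≤ 16/s
      have hyM0 : (0:ℝ) < yy M := by linarith [yy_ge M hM1]
      have h1 : (yy m)^(n-m) ≤ (yy M)^(n-m) := pow_le_pow_left₀ hy0.le hmono _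
      have h2 : (yy M)^(n-m) ≤ (yy M)^(n-M) :=
        pow_le_pow_of_le_one hyM0.le (yy_lt_one M).le (by omega)
      -- now (yy M)^(n-M) ≤ 16/s
      set s0 : ℝ := (1/2:ℝ)^(M+2) with hs0def
      have hs0pos : 0 < s0 := by positivity
      have hs0le : s0 ≤ 1/8 := by
        have : (1/2:ℝ)^(M+2) ≤ (1/2:ℝ)^3 :=
          pow_le_pow_of_le_one (by norm_num) (by norm_num) (by omega)
        norm_num at this ⊢
        linarith
      set k := n - M with hk
      have hks : s/16 ≤ (k:ℝ) * s0 := by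
        have hk2 : (n:ℝ)/2 ≤ (k:ℝ) := by
          have h1 : n ≤ 2 * k := by omega
          have h2 : ((n:ℕ):ℝ) ≤ ((2*k:ℕ):ℝ) := by exact_mod_cast h1
          push_cast at h2
          linarith
        have hs0ge : 1/(8*s) ≤ s0 := by
          rw [hs0def]
          have : (1/2:ℝ)^(M+2) = ((2:ℝ)^(M+2))⁻¹ := by
            rw [div_pow, one_pow, one_div]
          rw [this, one_div]
          apply inv_anti₀ (by positivity) g2
        calc s/16 = (n:ℝ) / 2 * (1/(8*s)) := by
              field_simp
              rw [← hss]; ring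
          _ ≤ (k:ℝ) * s0 := by
              apply mul_le_mul hk2 hs0ge (by positivity) (by positivity)
      have hBer : 1 + (k:ℝ) * s0 ≤ (1 + s0)^k :=
        one_add_mul_le_pow (by linarith) k
      have hprod : (yy M)^k * (1+s0)^k ≤ 1 := by
        rw [← mul_pow]
        have hy : yy M = 1 - s0 := by rw [yy, hs0def]
        have : (yy M) * (1 + s0) = 1 - s0^2 := by rw [hy]; ring
        rw [this]
        apply pow_le_one₀ (by nlinarith) (by nlinarith)
      have hfin : (yy M)^k ≤ 16/s := by
        have hpos : (0:ℝ) < 1 + (k:ℝ)*s0 := by positivity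
        have h5 : (yy M)^k ≤ 1/(1 + (k:ℝ)*s0) := by
          rw [le_div_iff₀ hpos]
          calc (yy M)^k * (1 + (k:ℝ)*s0) ≤ (yy M)^k * (1+s0)^k := by
                apply mul_le_mul_of_nonneg_left hBer (by positivity)
            _ ≤ 1 := hprod
        calc (yy M)^k ≤ 1/(1 + (k:ℝ)*s0) := h5
          _ ≤ 1/((k:ℝ)*s0) := by
              have hkpos : (0:ℝ) < (k:ℝ)*s0 := by linarith
              apply div_le_div_of_nonneg_left (by norm_num) hkpos (by linarith)
          _ ≤ 1/(s/16) := by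
              apply div_le_div_of_nonneg_left (by norm_num) (by linarith) hks
          _ = 16/s := by field_simp
      exact le_trans h1 (le_trans h2 hfin)
    calc ∑ m ∈ Finset.Icc 1 M, (1/2:ℝ)^m * (yy m) ^ (n - m)
        ≤ ∑ m ∈ Finset.Icc 1 M, (1/2:ℝ)^m * (16/s) := by
          apply Finset.sum_le_sum
          intro m hm
          exact mul_le_mul_of_nonneg_left (hB m hm) (by positivity)
      _ = (∑ m ∈ Finset.Icc 1 M, (1/2:ℝ)^m) * (16/s) := by rw [← Finset.sum_mul]
      _ ≤ 1 * (16/s) := by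
          apply mul_le_mul_of_nonneg_right _ (by positivity)
          calc ∑ m ∈ Finset.Icc 1 M, (1/2:ℝ)^m ≤ (1/2)/(1-1/2) :=
                geoSum _ (by norm_num) (by norm_num) _
            _ = 1 := by norm_num
      _ = 16/s := by ring
  have hS2 : ∑ m ∈ Finset.Ioc M n, (1/2:ℝ)^m * (yy m) ^ (n - m) ≤ 1 / s := by
    have hstep : ∀ m ∈ Finset.Ioc M n, (1/2:ℝ)^m * (yy m) ^ (n - m) ≤ (1/2:ℝ)^m := by
      intro m hm
      obtain ⟨hm1, hmn⟩ := Finset.mem_Ioc.1 hm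
      have hy0 : (0:ℝ) < yy m := by linarith [yy_ge m (by omega)]
      calc (1/2:ℝ)^m * (yy m) ^ (n - m) ≤ (1/2:ℝ)^m * 1 := by
            apply mul_le_mul_of_nonneg_left _ (by positivity)
            exact pow_le_one₀ hy0.le (yy_lt_one m).le
        _ = (1/2:ℝ)^m := by ring
    calc ∑ m ∈ Finset.Ioc M n, (1/2:ℝ)^m * (yy m) ^ (n - m)
        ≤ ∑ m ∈ Finset.Ioc M n, (1/2:ℝ)^m := Finset.sum_le_sum hstep
      _ ≤ (1/2:ℝ)^M := by
          rw [show Finset.Ioc M n = Finset.Ico (M+1) (n+1) by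
            ext x; simp [Finset.mem_Ioc, Finset.mem_Ico]]
          rw [Finset.sum_Ico_eq_sum_range]
          have : ∀ i, (1/2:ℝ) ^ (M + 1 + i) = (1/2:ℝ)^(M+1) * (1/2)^i := fun i => by
            rw [pow_add]
          simp only [this, ← Finset.mul_sum]
          calc (1/2:ℝ)^(M+1) * ∑ i ∈ Finset.range (n+1-(M+1)), (1/2:ℝ)^i
              ≤ (1/2:ℝ)^(M+1) * (1/(1-1/2)) := by
                apply mul_le_mul_of_nonneg_left (geoSum0 _ (by norm_num) (by norm_num) _)
                positivity
            _ = (1/2:ℝ)^M := by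
                rw [pow_succ]; norm_num
                ring
      _ ≤ 1/s := by
          have : (1/2:ℝ)^M = ((2:ℝ)^M)⁻¹ := by
            rw [div_pow, one_pow, one_div]
          rw [this, one_div]
          apply inv_anti₀ hs0 g1
  calc probLastPartNew n
      ≤ (16/7) * ∑ m ∈ Finset.Icc 1 n, (1/2:ℝ)^m * (yy m) ^ (n - m) := hsplit
    _ = (16/7) * (∑ m ∈ Finset.Icc 1 M, (1/2:ℝ)^m * (yy m) ^ (n - m)
        + ∑ m ∈ Finset.Ioc M n, (1/2:ℝ)^m * (yy m) ^ (n - m)) := by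
        rw [hunion, Finset.sum_union hdisj]
    _ ≤ (16/7) * (16/s + 1/s) :=
        mul_le_mul_of_nonneg_left (add_le_add hS1 hS2) (by norm_num)
    _ = (16/7) * (17/s) := by rw [← add_div]; norm_num
    _ = (272/7) / s := by rw [← mul_div_assoc]; norm_num
    _ ≤ 39 / s := by
        gcongr
        norm_num

theorem probLastPartNew_tendsto_zero :
    Tendsto probLastPartNew atTop (nhds 0) ∧
    ∃ C > (0 : ℝ), ∀ n : ℕ, 2 ≤ n →
      probLastPartNew n ≤ C * Real.sqrt (n * Real.log n) / n := by
  have hsqrtTop : Tendsto (fun n : ℕ => Real.sqrt n) atTop atTop := by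
    refine tendsto_atTop_atTop_of_monotone ?_ ?_
    · intro a b hab
      exact Real.sqrt_le_sqrt (Nat.cast_le.2 hab)
    · intro b
      refine ⟨⌈(max b 0)^2⌉₊, ?_⟩
      have h0 : 0 ≤ max b 0 := le_max_right _ _
      calc b ≤ max b 0 := le_max_left _ _
        _ = Real.sqrt ((max b 0)^2) := (Real.sqrt_sq h0).symm
        _ ≤ Real.sqrt ((⌈(max b 0)^2⌉₊ : ℝ)) := Real.sqrt_le_sqrt (Nat.le_ceil _)
  constructor
  · apply squeeze_zero' (g := fun n : ℕ => 39 / Real.sqrt n)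
    · exact Eventually.of_forall prob_nonneg
    · filter_upwards [eventually_ge_atTop 2] with n hn
      exact prob_le n hn
    · exact Filter.Tendsto.div_atTop tendsto_const_nhds hsqrtTop
  · refine ⟨100, by norm_num, fun n hn => ?_⟩
    have hn0 : (0:ℝ) < n := by positivity
    have hs : (0:ℝ) < Real.sqrt n := Real.sqrt_pos.2 hn0
    have hlog : (1/2 : ℝ) ≤ Real.log n := by
      have h2 : Real.log 2 ≤ Real.log n :=
        Real.log_le_log (by norm_num) (by exact_mod_cast hn)
      have := Real.log_two_gt_d9
      linarith
    have hslog : (39/100 : ℝ) ≤ Real.sqrt (Real.log n) := by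
      rw [Real.le_sqrt (by norm_num) (by linarith)]
      nlinarith
    have h2 : Real.sqrt ((n:ℝ) * Real.log n) = Real.sqrt n * Real.sqrt (Real.log n) :=
      Real.sqrt_mul hn0.le _
    have e : 100 * Real.sqrt ((n:ℝ) * Real.log n) / n
        = 100 * Real.sqrt (Real.log n) / Real.sqrt n := by
      rw [h2, div_eq_div_iff hn0.ne' hs.ne']
      have hself : Real.sqrt (n:ℝ) * Real.sqrt (n:ℝ) = n := Real.mul_self_sqrt hn0.le
      calc 100 * (Real.sqrt n * Real.sqrt (Real.log n)) * Real.sqrt n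
          = 100 * Real.sqrt (Real.log n) * (Real.sqrt n * Real.sqrt n) := by ring
        _ = 100 * Real.sqrt (Real.log n) * n := by rw [hself]
    calc probLastPartNew n ≤ 39 / Real.sqrt n := prob_le n hn
      _ ≤ 100 * Real.sqrt (Real.log n) / Real.sqrt n := by
          gcongr
          linarith
      _ = 100 * Real.sqrt ((n:ℝ) * Real.log n) / n := e.symm
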